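/- The success probability p(N,M) = Σ_{m=1}^{M} (N/M)·((M-m)/M)^{N-1} is nonincreasing in N for fixed M (N ≥ 1), and nondecreasing in M for fixed N; moreover p(N,M) → 1 as M → ∞ with N fixed. -/

import Mathlib

open Filter Finset

lemma auxB (a n : ℕ) : (a + 1) ^ (n + 1) ≤ a ^ (n + 1) + (n + 1) * (a + 1) ^ n := by
  induction n with
  | zero => simp
  | succ n ih =>
    calc (a+1)^(n+2) = (a+1)^(n+1) * (a+1) := by ring
    _ ≤ (a^(n+1) + (n+1)*(a+1)^n) * (a+1) := Nat.mul_le_mul_right _ ih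
    _ = a^(n+2) + a^(n+1) + (n+1)*(a+1)^(n+1) := by ring
    _ ≤ a^(n+2) + (a+1)^(n+1) + (n+1)*(a+1)^(n+1) := by
        have h : a^(n+1) ≤ (a+1)^(n+1) := Nat.pow_le_pow_left (Nat.le_succ a) _
        omega
    _ = a^(n+2) + (n+2)*(a+1)^(n+1) := by ring

lemma auxB' (a n : ℕ) : a ^ (n + 1) + (n + 1) * a ^ n ≤ (a + 1) ^ (n + 1) := by
  induction n with
  | zero => simp
  | succ n ih =>
    calc a^(n+2) + (n+2)*a^(n+1) ≤ (a^(n+1) + (n+1)*a^n) * (a+1) := by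
          have h : (a^(n+1) + (n+1)*a^n) * (a+1) = a^(n+2) + (n+2)*a^(n+1) + (n+1)*a^n := by ring
          omega
    _ ≤ (a+1)^(n+1) * (a+1) := Nat.mul_le_mul_right _ ih
    _ = (a+1)^(n+2) := by ring

lemma K1 (n M : ℕ) : M ^ (n + 1) ≤ (n + 1) * ∑ k ∈ range (M + 1), k ^ n := by
  induction M with
  | zero => simp
  | succ M ih =>
    have hs : ∑ k ∈ range (M+2), k^n = ∑ k ∈ range (M+1), k^n + (M+1)^n :=
      Finset.sum_range_succ _ _
    calc (M+1)^(n+1) ≤ M^(n+1) + (n+1)*(M+1)^n := auxB M n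
    _ ≤ (n+1) * ∑ k ∈ range (M+1), k^n + (n+1)*(M+1)^n := by omega
    _ = (n+1) * ∑ k ∈ range (M+2), k^n := by rw [hs]; ring

lemma K2 (n M : ℕ) : (n + 1) * ∑ k ∈ range M, k ^ n ≤ M ^ (n + 1) := by
  induction M with
  | zero => simp
  | succ M ih =>
    have hs : ∑ k ∈ range (M+1), k^n = ∑ k ∈ range M, k^n + M^n :=
      Finset.sum_range_succ _ _
    calc (n+1) * ∑ k ∈ range (M+1), k^n = (n+1) * ∑ k ∈ range M, k^n + (n+1)*M^n := by
          rw [hs]; ring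
    _ ≤ M^(n+1) + (n+1)*M^n := by omega
    _ ≤ (M+1)^(n+1) := auxB' M n

lemma K3 (n M : ℕ) : (n + 2) * ∑ k ∈ range M, k ^ (n + 1) ≤ (n + 1) * M * ∑ k ∈ range M, k ^ n := by
  induction M with
  | zero => simp
  | succ M ih =>
    have hs1 : ∑ k ∈ range (M+1), k^(n+1) = ∑ k ∈ range M, k^(n+1) + M^(n+1) :=
      Finset.sum_range_succ _ _
    have hs0 : ∑ k ∈ range (M+1), k^n = ∑ k ∈ range M, k^n + M^n :=
      Finset.sum_range_succ _ _
    have h2 : M^(n+1) ≤ (n+1) * ∑ k ∈ range M, k^n + (n+1)*M^n := by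
      have := K1 n M
      rw [hs0, Nat.mul_add] at this
      omega
    have hp : (n+1)*(M+1)*M^n = (n+1)*M^(n+1) + (n+1)*M^n := by
      rw [pow_succ]; ring
    calc (n+2) * ∑ k ∈ range (M+1), k^(n+1)
        = (n+2) * ∑ k ∈ range M, k^(n+1) + (n+2)*M^(n+1) := by rw [hs1]; ring
    _ ≤ (n+1) * M * ∑ k ∈ range M, k^n + (n+2)*M^(n+1) := by omega
    _ ≤ (n+1) * (M+1) * ∑ k ∈ range (M+1), k^n := by
        rw [hs0]
        have expand : (n+1) * (M+1) * (∑ k ∈ range M, k^n + M^n)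
            = (n+1)*M*∑ k ∈ range M, k^n + ((n+1) * ∑ k ∈ range M, k^n + (n+1)*(M+1)*M^n) := by ring
        rw [expand, hp]
        have hq : (n+2)*M^(n+1) = M^(n+1) + (n+1)*M^(n+1) := by ring
        omega

/-- Success probability of contention resolution with `N` pairs and `M` mini-slots
(Theorem 4 of the paper). -/
noncomputable def successProb (N M : ℕ) : ℝ :=
  ∑ m ∈ Finset.Icc 1 M, ((N : ℝ) / M) * (((M : ℝ) - m) / M) ^ (N - 1)


lemma successProb_eq (N M : ℕ) (hN : 1 ≤ N) (hM : 1 ≤ M) :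
    successProb N M = (N : ℝ) * (∑ k ∈ Finset.range M, (k : ℝ) ^ (N - 1)) / (M : ℝ) ^ N := by
  have hM0 : (0:ℝ) < M := by exact_mod_cast hM
  have key : ∑ m ∈ Finset.Icc 1 M, (((M:ℝ) - m)/M) ^ (N-1)
      = ∑ k ∈ Finset.range M, ((k:ℝ)/M) ^ (N-1) := by
    apply Finset.sum_nbij' (i := fun m => M - m) (j := fun k => M - k)
    · intro m hm
      simp only [Finset.mem_Icc] at hm
      simp only [Finset.mem_range]
      omega
    · intro k hk
      simp only [Finset.mem_range] at hk
      simp only [Finset.mem_Icc]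
      omega
    · intro m hm
      simp only [Finset.mem_Icc] at hm
      omega
    · intro k hk
      simp only [Finset.mem_range] at hk
      omega
    · intro m hm
      simp only [Finset.mem_Icc] at hm
      have : ((M - m : ℕ) : ℝ) = (M:ℝ) - m := by
        push_cast [Nat.cast_sub hm.2]; ring
      rw [this]
  rw [successProb, ← Finset.mul_sum, key]
  have : ∀ k : ℕ, ((k:ℝ)/M)^(N-1) = (k:ℝ)^(N-1) / (M:ℝ)^(N-1) := fun k => div_pow _ _ _
  simp only [this]
  rw [← Finset.sum_div]
  rw [show (M:ℝ)^N = (M:ℝ)^(N-1) * M by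
    rw [← pow_succ]; congr 1; omega]
  rw [div_mul_div_comm]
  ring

-- Step B: the regrouped convexity bound
lemma stepB (n M : ℕ) (hM : 1 ≤ M) :
    ∑ k ∈ range M, ((k:ℝ)/M) ^ (n+1)
      ≤ (((M:ℝ)-1)/M) * ∑ j ∈ range (M+1), ((j:ℝ)/(M+1)) ^ (n+1) := by
  have hM0 : (0:ℝ) < M := by exact_mod_cast hM
  have hM1 : (0:ℝ) < (M:ℝ) + 1 := by positivity
  have stepA : ∀ k ∈ range M, ((k:ℝ)/M) ^ (n+1)
      ≤ (((M:ℝ)-k)/M) * ((k:ℝ)/((M:ℝ)+1)) ^ (n+1)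
        + ((k:ℝ)/M) * (((k:ℝ)+1)/((M:ℝ)+1)) ^ (n+1) := by
    intro k hk
    simp only [Finset.mem_range] at hk
    have hkM : (k:ℝ) < M := by exact_mod_cast hk
    have hx : (k:ℝ)/((M:ℝ)+1) ∈ Set.Ici (0:ℝ) := by
      simp only [Set.mem_Ici]; positivity
    have hy : ((k:ℝ)+1)/((M:ℝ)+1) ∈ Set.Ici (0:ℝ) := by
      simp only [Set.mem_Ici]; positivity
    have ha : (0:ℝ) ≤ ((M:ℝ)-k)/M := by
      apply div_nonneg _ hM0.le; linarith
    have hb : (0:ℝ) ≤ (k:ℝ)/M := by positivity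
    have hab : ((M:ℝ)-k)/M + (k:ℝ)/M = 1 := by field_simp; ring
    have hcx := (convexOn_pow (n+1)).2 hx hy ha hb hab
    have harg : (((M:ℝ)-k)/M) • ((k:ℝ)/((M:ℝ)+1)) + ((k:ℝ)/M) • (((k:ℝ)+1)/((M:ℝ)+1))
        = (k:ℝ)/M := by
      simp only [smul_eq_mul]
      field_simp
      ring
    rw [harg] at hcx
    simpa [smul_eq_mul] using hcx
  calc ∑ k ∈ range M, ((k:ℝ)/M) ^ (n+1)
      ≤ ∑ k ∈ range M, ((((M:ℝ)-k)/M) * ((k:ℝ)/((M:ℝ)+1)) ^ (n+1)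
          + ((k:ℝ)/M) * (((k:ℝ)+1)/((M:ℝ)+1)) ^ (n+1)) := Finset.sum_le_sum stepA
    _ = (((M:ℝ)-1)/M) * ∑ j ∈ range (M+1), ((j:ℝ)/(M+1)) ^ (n+1) := by
        rw [Finset.sum_add_distrib]
        have eA : ∑ k ∈ range M, (((M:ℝ)-k)/M) * ((k:ℝ)/((M:ℝ)+1)) ^ (n+1)
            = ∑ k ∈ range (M+1), (((M:ℝ)-k)/M) * ((k:ℝ)/((M:ℝ)+1)) ^ (n+1) := by
          rw [Finset.sum_range_succ]
          simp
        have eB : ∑ k ∈ range M, ((k:ℝ)/M) * (((k:ℝ)+1)/((M:ℝ)+1)) ^ (n+1)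
            = ∑ j ∈ range (M+1), (((j:ℝ)-1)/M) * ((j:ℝ)/((M:ℝ)+1)) ^ (n+1) := by
          rw [Finset.sum_range_succ']
          push_cast
          simp [zero_pow]
        rw [eA, eB, ← Finset.sum_add_distrib, Finset.mul_sum]
        apply Finset.sum_congr rfl
        intro j hj
        ring

lemma successProb_one (M : ℕ) (hM : 1 ≤ M) : successProb 1 M = 1 := by
  have hM0 : (0:ℝ) < M := by exact_mod_cast hM
  rw [successProb_eq 1 M le_rfl hM]
  simp [hM0.ne']

lemma part2 (N M : ℕ) (hN : 1 ≤ N) (hM : 1 ≤ M) : successProb N M ≤ successProb N (M + 1) := by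
  have hM0 : (0:ℝ) < M := by exact_mod_cast hM
  have hM1 : (0:ℝ) < (M:ℝ) + 1 := by positivity
  match N, hN with
  | 1, _ => rw [successProb_one M hM, successProb_one (M+1) (by omega)]
  | (n+2), _ =>
    rw [successProb_eq _ _ (by omega) hM, successProb_eq _ _ (by omega) (by omega)]
    simp only [Nat.add_sub_cancel, show n+2-1 = n+1 from rfl]
    set S : ℝ := ∑ k ∈ range M, (k:ℝ) ^ (n+1) with hS
    set S' : ℝ := ∑ k ∈ range (M+1), (k:ℝ) ^ (n+1) with hS'
    have hS'0 : 0 ≤ S' := by positivity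
    have hsum := stepB n M hM
    have lhs_eq : ∑ k ∈ range M, ((k:ℝ)/M) ^ (n+1) = S / (M:ℝ)^(n+1) := by
      rw [hS, Finset.sum_div]
      exact Finset.sum_congr rfl fun k _ => div_pow _ _ _
    have rhs_eq : ∑ j ∈ range (M+1), ((j:ℝ)/((M:ℝ)+1)) ^ (n+1) = S' / ((M:ℝ)+1)^(n+1) := by
      rw [hS', Finset.sum_div]
      exact Finset.sum_congr rfl fun k _ => div_pow _ _ _
    rw [lhs_eq] at hsum
    have rhs_eq' : (((M:ℝ)-1)/M) * ∑ j ∈ range (M+1), ((j:ℝ)/(↑M+1)) ^ (n+1)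
        = (((M:ℝ)-1) * S') / ((M:ℝ) * ((M:ℝ)+1)^(n+1)) := by
      push_cast
      rw [rhs_eq, div_mul_div_comm]
    rw [rhs_eq'] at hsum
    rw [div_le_div_iff₀ (by positivity) (by positivity)] at hsum
    -- hsum : S * (M * (M+1)^(n+1)) ≤ (M-1) * S' * M^(n+1)
    rw [div_le_div_iff₀ (by positivity) (by positivity)]
    push_cast
    have key : S * ((M:ℝ)+1)^(n+2) * M ≤ S' * (M:ℝ)^(n+2) * M := by
      have h2 := mul_le_mul_of_nonneg_right hsum hM1.le
      have e1 : S * ((M:ℝ) * ((M:ℝ)+1)^(n+1)) * ((M:ℝ)+1) = S * ((M:ℝ)+1)^(n+2) * M := by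
        rw [pow_succ]; ring
      have e2 : ((M:ℝ)-1) * S' * (M:ℝ)^(n+1) * ((M:ℝ)+1)
          = S' * (M:ℝ)^(n+2) * M - S' * (M:ℝ)^(n+1) := by
        rw [pow_succ]; ring
      rw [e1, e2] at h2
      have : 0 ≤ S' * (M:ℝ)^(n+1) := by positivity
      linarith
    have key2 : S * ((M:ℝ)+1)^(n+2) ≤ S' * (M:ℝ)^(n+2) :=
      le_of_mul_le_mul_right key hM0
    have hN0 : (0:ℝ) ≤ ((n:ℝ)+2) := by positivity
    nlinarith [mul_le_mul_of_nonneg_left key2 hN0]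

lemma part1 (N M : ℕ) (hN : 1 ≤ N) (hM : 1 ≤ M) : successProb (N + 1) M ≤ successProb N M := by
  obtain ⟨n, rfl⟩ : ∃ n, N = n + 1 := ⟨N - 1, by omega⟩
  have hM0 : (0:ℝ) < M := by exact_mod_cast hM
  rw [successProb_eq _ _ (by omega) hM, successProb_eq _ _ (by omega) hM]
  simp only [Nat.add_sub_cancel]
  have key : ((n:ℝ) + 2) * ∑ k ∈ range M, (k:ℝ) ^ (n+1)
      ≤ ((n:ℝ) + 1) * M * ∑ k ∈ range M, (k:ℝ) ^ n := by
    have := K3 n M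
    exact_mod_cast this
  rw [div_le_div_iff₀ (by positivity) (by positivity)]
  have hpow : ((0:ℝ)) ≤ (M:ℝ) ^ (n+1) := by positivity
  have := mul_le_mul_of_nonneg_right key hpow
  calc (↑(n+1+1) : ℝ) * (∑ k ∈ range M, (k:ℝ) ^ (n+1)) * (M:ℝ)^(n+1)
      = (((n:ℝ)+2) * ∑ k ∈ range M, (k:ℝ) ^ (n+1)) * (M:ℝ)^(n+1) := by push_cast; ring
    _ ≤ (((n:ℝ)+1) * M * ∑ k ∈ range M, (k:ℝ) ^ n) * (M:ℝ)^(n+1) := this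
    _ = (↑(n+1):ℝ) * (∑ k ∈ range M, (k:ℝ) ^ n) * (M:ℝ)^(n+1+1) := by push_cast; ring


lemma part3 (N : ℕ) (hN : 1 ≤ N) :
    Tendsto (fun M : ℕ => successProb N M) atTop (nhds 1) := by
  obtain ⟨n, rfl⟩ : ∃ n, N = n + 1 := ⟨N - 1, by omega⟩
  apply tendsto_of_tendsto_of_tendsto_of_le_of_le'
    (g := fun M : ℕ => 1 - ((n:ℝ)+1)/M) (h := fun _ : ℕ => (1:ℝ))
  · have h0 : Tendsto (fun M : ℕ => ((n:ℝ)+1)/M) atTop (nhds 0) :=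
      tendsto_const_div_atTop_nhds_zero_nat _
    simpa using tendsto_const_nhds.sub h0
  · exact tendsto_const_nhds
  · filter_upwards [Filter.eventually_ge_atTop 1] with M hM
    have hM0 : (0:ℝ) < M := by exact_mod_cast hM
    rw [successProb_eq _ _ (by omega) hM]
    simp only [Nat.add_sub_cancel]
    rw [le_div_iff₀ (by positivity)]
    have key : (M:ℝ)^(n+1) ≤ ((n:ℝ)+1) * ((∑ k ∈ range M, (k:ℝ)^n) + (M:ℝ)^n) := by
      have := K1 n M
      rw [Finset.sum_range_succ] at this
      exact_mod_cast this
    have hmm : (M:ℝ)^(n+1) = (M:ℝ)^n * M := pow_succ _ _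
    have : (1 - ((n:ℝ)+1)/M) * (M:ℝ)^(n+1)
        = (M:ℝ)^(n+1) - ((n:ℝ)+1) * (M:ℝ)^n := by
      field_simp
      ring
    rw [this]
    push_cast
    linarith [key]
  · filter_upwards [Filter.eventually_ge_atTop 1] with M hM
    have hM0 : (0:ℝ) < M := by exact_mod_cast hM
    rw [successProb_eq _ _ (by omega) hM]
    simp only [Nat.add_sub_cancel]
    rw [div_le_one (by positivity)]
    have key : ((n:ℝ)+1) * (∑ k ∈ range M, (k:ℝ)^n) ≤ (M:ℝ)^(n+1) := by
      exact_mod_cast K2 n M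
    push_cast
    linarith [key]

/-- `p(N,M)` is nonincreasing in `N` for fixed `M`, nondecreasing in `M` for fixed
`N`, and tends to `1` as `M → ∞` with `N` fixed. -/
theorem successProb_monotonicity_and_limit :
    (∀ N M : ℕ, 1 ≤ N → 1 ≤ M → successProb (N + 1) M ≤ successProb N M) ∧
    (∀ N M : ℕ, 1 ≤ N → 1 ≤ M → successProb N M ≤ successProb N (M + 1)) ∧
    (∀ N : ℕ, 1 ≤ N →
      Tendsto (fun M : ℕ => successProb N M) atTop (nhds 1)) := by
  exact ⟨part1, part2, part3⟩
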